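/- Let f₁, f₂ be nonnegative functions in L₁(μ) with ‖f₁ + f₂‖₁ ≤ 1, and let 0 < ε < 1/5 satisfy 1 - ε² ≤ ‖f₁ - f₂‖₁. Define W = {t : |f₁(t) - f₂(t)| ≤ (1-ε)(f₁(t) + f₂(t))}. Then ∫_W (f₁ + f₂) dμ ≤ ε. -/
import Mathlib


open MeasureTheory

/-- Let `f₁, f₂` be nonnegative functions in `L₁(μ)` with `‖f₁ + f₂‖₁ ≤ 1`, and let
`0 < ε < 1/5` satisfy `1 - ε² ≤ ‖f₁ - f₂‖₁`.  With
`W = {t : |f₁ t - f₂ t| ≤ (1-ε) * (f₁ t + f₂ t)}` one has `∫_W (f₁ + f₂) dμ ≤ ε`. -/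
theorem setIntegral_add_le_of_norm_sub_large
    {α : Type*} [MeasurableSpace α] (μ : Measure α)
    (f₁ f₂ : α → ℝ) (hf₁ : Integrable f₁ μ) (hf₂ : Integrable f₂ μ)
    (hf₁0 : 0 ≤ᵐ[μ] f₁) (hf₂0 : 0 ≤ᵐ[μ] f₂)
    (ε : ℝ) (hε0 : 0 < ε) (hε : ε < 1/5)
    (hsum : ∫ t, |f₁ t + f₂ t| ∂μ ≤ 1)
    (hdiff : 1 - ε ^ 2 ≤ ∫ t, |f₁ t - f₂ t| ∂μ) :
    ∫ t in {t | |f₁ t - f₂ t| ≤ (1 - ε) * (f₁ t + f₂ t)}, (f₁ t + f₂ t) ∂μ ≤ ε := by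
  -- measurable representatives
  set g₁ := hf₁.1.mk f₁ with hg₁def
  set g₂ := hf₂.1.mk f₂ with hg₂def
  have heq₁ : f₁ =ᵐ[μ] g₁ := hf₁.1.ae_eq_mk
  have heq₂ : f₂ =ᵐ[μ] g₂ := hf₂.1.ae_eq_mk
  set W' : Set α := {t | |g₁ t - g₂ t| ≤ (1 - ε) * (g₁ t + g₂ t)} with hW'def
  have hg₁m : Measurable g₁ := hf₁.1.stronglyMeasurable_mk.measurable
  have hg₂m : Measurable g₂ := hf₂.1.stronglyMeasurable_mk.measurable
  have hW'meas : MeasurableSet W' :=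
    measurableSet_le (hg₁m.sub hg₂m).abs (measurable_const.mul (hg₁m.add hg₂m))
  have hWW' : {t | |f₁ t - f₂ t| ≤ (1 - ε) * (f₁ t + f₂ t)} =ᵐ[μ] W' := by
    filter_upwards [heq₁, heq₂] with t h1 h2
    show (|f₁ t - f₂ t| ≤ (1 - ε) * (f₁ t + f₂ t)) = (|g₁ t - g₂ t| ≤ (1 - ε) * (g₁ t + g₂ t))
    rw [h1, h2]
  rw [Measure.restrict_congr_set hWW']
  -- integrability facts
  have hadd : Integrable (fun t => f₁ t + f₂ t) μ := hf₁.add hf₂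
  have habs : Integrable (fun t => |f₁ t - f₂ t|) μ := (hf₁.sub hf₂).abs
  have hrem : Integrable (fun t => f₁ t + f₂ t - |f₁ t - f₂ t|) μ := hadd.sub habs
  have hrem0 : 0 ≤ᵐ[μ] fun t => f₁ t + f₂ t - |f₁ t - f₂ t| := by
    filter_upwards [hf₁0, hf₂0] with t h1 h2
    simp only [Pi.zero_apply] at h1 h2
    have : |f₁ t - f₂ t| ≤ f₁ t + f₂ t := abs_le.mpr ⟨by linarith, by linarith⟩
    simpa using this
  -- key pointwise bound on W'
  have h1 : ε * ∫ t in W', (f₁ t + f₂ t) ∂μ ≤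
      ∫ t in W', (f₁ t + f₂ t - |f₁ t - f₂ t|) ∂μ := by
    rw [← integral_const_mul]
    refine integral_mono_ae ((hadd.restrict).const_mul ε) (hrem.restrict) ?_
    filter_upwards [ae_restrict_mem hW'meas,
      ae_restrict_of_ae heq₁, ae_restrict_of_ae heq₂,
      ae_restrict_of_ae hf₁0, ae_restrict_of_ae hf₂0] with t ht e1 e2 p1 p2
    simp only [Pi.zero_apply] at p1 p2
    have hW : |g₁ t - g₂ t| ≤ (1 - ε) * (g₁ t + g₂ t) := ht
    rw [← e1, ← e2] at hW
    have habs0 : 0 ≤ |f₁ t - f₂ t| := abs_nonneg _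
    nlinarith [hW]
  have h2 : ∫ t in W', (f₁ t + f₂ t - |f₁ t - f₂ t|) ∂μ ≤
      ∫ t, (f₁ t + f₂ t - |f₁ t - f₂ t|) ∂μ :=
    setIntegral_le_integral hrem hrem0
  have hsum' : ∫ t, (f₁ t + f₂ t) ∂μ ≤ 1 := by
    have : ∫ t, (f₁ t + f₂ t) ∂μ = ∫ t, |f₁ t + f₂ t| ∂μ := by
      refine integral_congr_ae ?_
      filter_upwards [hf₁0, hf₂0] with t p1 p2
      simp only [Pi.zero_apply] at p1 p2
      exact (abs_of_nonneg (by linarith)).symm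
    linarith
  have h3 : ∫ t, (f₁ t + f₂ t - |f₁ t - f₂ t|) ∂μ ≤ ε ^ 2 := by
    rw [integral_sub hadd habs]
    linarith
  have hfinal : ε * ∫ t in W', (f₁ t + f₂ t) ∂μ ≤ ε * ε := by
    calc ε * ∫ t in W', (f₁ t + f₂ t) ∂μ ≤ ε ^ 2 := h1.trans (h2.trans h3)
    _ = ε * ε := sq ε
  exact le_of_mul_le_mul_left hfinal hε0
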